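/- In the quantizer-based recursive scheme, for every Borel set C the Cesàro averages of the successive conditional probabilities converge to the conditional probability given the infinite past: almost surely, (1/k) Σ_{j=1}^{k} P(X_0 ∈ C | σ(G_{j-1}(X_{-λ_{j-1}}^{-1}))) → P(X_0 ∈ C | X_{-1}, X_{-2}, …) as k → ∞. -/

import Mathlib

open MeasureTheory ProbabilityTheory Filter Set Topology

/-- `lamQ G X k ω` is the random length `λ_k` of the quantizer-based recursive
pattern-matching scheme: `λ_0 = 1` and `λ_k = τ_k + λ_{k-1}`, where
`τ_k = min {t > 0 : G_k(X_{-λ_{k-1}-t}^{-1-t}) = G_k(X_{-λ_{k-1}}^{-1})}`. -/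
noncomputable def lamQ {Ω : Type*} (G : ℕ → ℝ → ℕ) (X : ℤ → Ω → ℝ) : ℕ → Ω → ℕ
  | 0 => fun _ => 1
  | k + 1 => fun ω =>
      sInf {t : ℕ | 0 < t ∧ ∀ i : ℕ, 1 ≤ i → i ≤ lamQ G X k ω →
          G (k + 1) (X (-(i : ℤ) - (t : ℤ)) ω) = G (k + 1) (X (-(i : ℤ)) ω)}
        + lamQ G X k ω

/-- `tauQ G X k ω` is the return time `τ_k` (for `k ≥ 1`):
`τ_k = min {t > 0 : G_k(X_{-λ_{k-1}-t}^{-1-t}) = G_k(X_{-λ_{k-1}}^{-1})}`. -/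
noncomputable def tauQ {Ω : Type*} (G : ℕ → ℝ → ℕ) (X : ℤ → Ω → ℝ) (k : ℕ) (ω : Ω) : ℕ :=
  sInf {t : ℕ | 0 < t ∧ ∀ i : ℕ, 1 ≤ i → i ≤ lamQ G X (k - 1) ω →
      G k (X (-(i : ℤ) - (t : ℤ)) ω) = G k (X (-(i : ℤ)) ω)}

/-- `pastSigma X` is the σ-field `σ(X_{-1}, X_{-2}, …)` generated by the infinite past. -/
noncomputable def pastSigma {Ω : Type*} (X : ℤ → Ω → ℝ) : MeasurableSpace Ω :=
  ⨆ n : ℕ, MeasurableSpace.comap (X (-(n : ℤ) - 1)) inferInstance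

/-- `patF G X j` is the σ-field `ℱ_j = σ(G_j(X_{-λ_j}^{-1}))` generated by the quantized
pattern of (random) length `λ_j`, i.e. by the events `{G_j(X_{-m}^{-1}) = b, λ_j = m}`. -/
noncomputable def patF {Ω : Type*} (G : ℕ → ℝ → ℕ) (X : ℤ → Ω → ℝ) (j : ℕ) :
    MeasurableSpace Ω :=
  MeasurableSpace.comap
    (fun ω (i : ℕ) =>
      if 1 ≤ i ∧ i ≤ lamQ G X j ω then some (G j (X (-(i : ℤ)) ω)) else none) ⊤

section Helpers

variable {Ω : Type*}

lemma comap_top_mono {β γ : Type*} {f : Ω → β} {g : Ω → γ}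
    (h : ∀ ω ω', g ω = g ω' → f ω = f ω') :
    MeasurableSpace.comap f ⊤ ≤ MeasurableSpace.comap g ⊤ := by
  intro s hs
  obtain ⟨S, -, rfl⟩ := hs
  refine ⟨g '' (f ⁻¹' S), trivial, ?_⟩
  ext ω
  constructor
  · rintro ⟨ω', hω', hgeq⟩
    simpa [h ω' ω hgeq] using hω'
  · intro hω
    exact ⟨ω, hω, rfl⟩

lemma measurable_comp_comap_top {β γ : Type*} [MeasurableSpace γ] (Φ : Ω → β) (H : β → γ) :
    Measurable[MeasurableSpace.comap Φ ⊤] (fun ω => H (Φ ω)) :=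
  fun s _ => ⟨H ⁻¹' s, trivial, rfl⟩

lemma sInf_eq_iff_nat {S : Set ℕ} {n : ℕ} :
    sInf S = n ↔ ((n ∈ S ∨ (n = 0 ∧ ∀ t, t ∉ S)) ∧ ∀ t < n, t ∉ S) := by
  constructor
  · rintro rfl
    by_cases hne : S.Nonempty
    · exact ⟨Or.inl (Nat.sInf_mem hne), fun t ht => Nat.notMem_of_lt_sInf ht⟩
    · rw [Set.not_nonempty_iff_eq_empty] at hne
      subst hne
      simp [Nat.sInf_empty]
  · rintro ⟨h1 | ⟨rfl, h2⟩, hlt⟩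
    · refine le_antisymm (Nat.sInf_le h1) ?_
      by_contra hc
      push_neg at hc
      exact hlt _ hc (Nat.sInf_mem ⟨n, h1⟩)
    · have : S = ∅ := Set.eq_empty_iff_forall_notMem.2 h2
      rw [this, Nat.sInf_empty]

lemma measurable_sInf_pred {m : MeasurableSpace Ω} {P : ℕ → Ω → Prop}
    (hP : ∀ t, MeasurableSet[m] {ω | P t ω}) :
    Measurable[m] (fun ω => sInf {t | P t ω}) := by
  apply measurable_to_countable'
  intro n
  have hset : (fun ω => sInf {t | P t ω}) ⁻¹' {n} =
      (({ω | P n ω}) ∪ ({ω : Ω | n = 0} ∩ ⋂ t, {ω | P t ω}ᶜ)) ∩ ⋂ t < n, {ω | P t ω}ᶜ := by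
    ext ω
    simp only [Set.mem_preimage, Set.mem_singleton_iff, Set.mem_inter_iff, Set.mem_union,
      Set.mem_iInter, Set.mem_compl_iff, Set.mem_setOf_eq, sInf_eq_iff_nat]
  rw [hset]
  refine MeasurableSet.inter (MeasurableSet.union (hP n) (MeasurableSet.inter ?_
      (MeasurableSet.iInter fun t => (hP t).compl)))
    (MeasurableSet.iInter fun t => MeasurableSet.iInter fun _ => (hP t).compl)
  by_cases hn : n = 0 <;> simp [hn]

end Helpers

section Scheme

variable {Ω : Type*} (G : ℕ → ℝ → ℕ) (X : ℤ → Ω → ℝ)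

/-- The pattern map generating `patF`. -/
noncomputable def PhiQ (j : ℕ) (ω : Ω) : ℕ → Option ℕ := fun i =>
  if 1 ≤ i ∧ i ≤ lamQ G X j ω then some (G j (X (-(i : ℤ)) ω)) else none

lemma patF_eq_comap (j : ℕ) :
    patF G X j = MeasurableSpace.comap (fun ω => PhiQ G X j ω) ⊤ := rfl

lemma lamQ_succ (k : ℕ) (ω : Ω) :
    lamQ G X (k + 1) ω =
      sInf {t : ℕ | 0 < t ∧ ∀ i : ℕ, 1 ≤ i → i ≤ lamQ G X k ω →
          G (k + 1) (X (-(i : ℤ) - (t : ℤ)) ω) = G (k + 1) (X (-(i : ℤ)) ω)}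
        + lamQ G X k ω := rfl

lemma one_le_lamQ (k : ℕ) (ω : Ω) : 1 ≤ lamQ G X k ω := by
  induction k with
  | zero => exact le_refl _
  | succ k ih => rw [lamQ_succ]; omega

lemma lamQ_mono (ω : Ω) : Monotone (fun k => lamQ G X k ω) := by
  apply monotone_nat_of_le_succ
  intro k
  rw [lamQ_succ]
  omega

end Scheme

section GFacts

variable (G : ℕ → ℝ → ℕ)

lemma measurable_G (hGint : ∀ k n, ∃ a b : EReal,
      (G k) ⁻¹' {n} = {x : ℝ | a < (x : EReal) ∧ (x : EReal) ≤ b}) (k : ℕ) :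
    Measurable (G k) := by
  apply measurable_to_countable'
  intro n
  obtain ⟨a, b, hab⟩ := hGint k n
  rw [hab]
  have : {x : ℝ | a < (x : EReal) ∧ (x : EReal) ≤ b} =
      (fun x : ℝ => (x : EReal)) ⁻¹' (Set.Ioc a b) := rfl
  rw [this]
  exact measurable_coe_real_ereal measurableSet_Ioc

lemma G_det (hGmono : ∀ k, MeasurableSpace.comap (G k) ⊤ ≤ MeasurableSpace.comap (G (k + 1)) ⊤) :
    ∀ k j, k ≤ j → ∀ x y : ℝ, G j x = G j y → G k x = G k y := by
  intro k j hkj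
  induction j, hkj using Nat.le_induction with
  | base => exact fun x y h => h
  | succ j hkj ih =>
    intro x y hxy
    apply ih
    have hmem : MeasurableSet[MeasurableSpace.comap (G j) ⊤] ((G j) ⁻¹' {G j x}) :=
      ⟨{G j x}, trivial, rfl⟩
    obtain ⟨S, -, hS⟩ := hGmono j _ hmem
    have hx : x ∈ G (j + 1) ⁻¹' S := by rw [hS]; rfl
    have hy : y ∈ G (j + 1) ⁻¹' S := by simpa [Set.mem_preimage, hxy] using hx
    rw [hS] at hy
    exact hy.symm

lemma G_factor (hGmono : ∀ k, MeasurableSpace.comap (G k) ⊤ ≤ MeasurableSpace.comap (G (k + 1)) ⊤)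
    {k j : ℕ} (hkj : k ≤ j) : ∃ h : ℕ → ℕ, ∀ x, G k x = h (G j x) := by
  classical
  refine ⟨fun m => if hm : ∃ x, G j x = m then G k hm.choose else 0, fun x => ?_⟩
  have hx : ∃ y, G j y = G j x := ⟨x, rfl⟩
  simp only [dif_pos hx]
  exact G_det G hGmono k j hkj _ _ hx.choose_spec.symm

end GFacts

section Meas

variable {Ω : Type*} (G : ℕ → ℝ → ℕ) (X : ℤ → Ω → ℝ) {m : MeasurableSpace Ω}

lemma measurable_GX (hG : ∀ k, Measurable (G k))
    (hX : ∀ n : ℤ, n < 0 → Measurable[m] (X n)) (k : ℕ) {n : ℤ} (hn : n < 0) :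
    Measurable[m] (fun ω => G k (X n ω)) :=
  (hG k).comp (hX n hn)

lemma lamQ_measurable (hG : ∀ k, Measurable (G k))
    (hX : ∀ n : ℤ, n < 0 → Measurable[m] (X n)) (k : ℕ) :
    Measurable[m] (lamQ G X k) := by
  induction k with
  | zero => exact measurable_const
  | succ k ih =>
    have h1 : Measurable[m] (fun ω => sInf {t : ℕ | 0 < t ∧ ∀ i : ℕ, 1 ≤ i →
        i ≤ lamQ G X k ω →
        G (k + 1) (X (-(i : ℤ) - (t : ℤ)) ω) = G (k + 1) (X (-(i : ℤ)) ω)}) := by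
      apply measurable_sInf_pred
      intro t
      have : {ω | 0 < t ∧ ∀ i : ℕ, 1 ≤ i → i ≤ lamQ G X k ω →
          G (k + 1) (X (-(i : ℤ) - (t : ℤ)) ω) = G (k + 1) (X (-(i : ℤ)) ω)} =
          {ω : Ω | 0 < t} ∩ ⋂ i : ℕ, ⋂ _ : 1 ≤ i,
            ({ω | i ≤ lamQ G X k ω}ᶜ ∪
             {ω | G (k + 1) (X (-(i : ℤ) - (t : ℤ)) ω) = G (k + 1) (X (-(i : ℤ)) ω)}) := by
        ext ω
        simp only [Set.mem_inter_iff, Set.mem_setOf_eq, Set.mem_iInter, Set.mem_union,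
          Set.mem_compl_iff]
        constructor
        · rintro ⟨ht, h⟩
          exact ⟨ht, fun i hi => by
            by_cases hle : i ≤ lamQ G X k ω
            · exact Or.inr (h i hi hle)
            · exact Or.inl hle⟩
        · rintro ⟨ht, h⟩
          refine ⟨ht, fun i hi hle => ?_⟩
          rcases h i hi with h' | h'
          · exact absurd hle h'
          · exact h'
      rw [this]
      refine MeasurableSet.inter (by by_cases ht : 0 < t <;> simp [ht]) ?_
      refine MeasurableSet.iInter fun i => MeasurableSet.iInter fun hi => ?_
      refine MeasurableSet.union ?_ ?_
      · exact (ih (measurableSet_Ici : MeasurableSet (Set.Ici i))).compl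
      · exact measurableSet_eq_fun
          (measurable_GX G X hG hX (k + 1) (by omega))
          (measurable_GX G X hG hX (k + 1) (by omega))
    exact h1.add ih

end Meas

section Pattern

variable {Ω : Type*} (G : ℕ → ℝ → ℕ) (X : ℤ → Ω → ℝ)

/-- Deterministic pattern with length `m'` and values `v`. -/
noncomputable def patQ (m' : ℕ) (v : Fin m' → ℕ) : ℕ → Option ℕ := fun i =>
  if h : 1 ≤ i ∧ i ≤ m' then some (v ⟨i - 1, by omega⟩) else none

lemma PhiQ_eq_patQ (j : ℕ) (ω : Ω) :
    PhiQ G X j ω = patQ (lamQ G X j ω)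
      (fun i => G j (X (-((i : ℕ) : ℤ) - 1) ω)) := by
  funext i
  unfold PhiQ patQ
  by_cases h : 1 ≤ i ∧ i ≤ lamQ G X j ω
  · rw [if_pos h, dif_pos h]
    congr 2
    have : ((i - 1 : ℕ) : ℤ) = (i : ℤ) - 1 := by omega
    rw [this]
    ring_nf
  · rw [if_neg h, dif_neg h]

lemma patF_le_of {m : MeasurableSpace Ω} (hG : ∀ k, Measurable (G k))
    (hX : ∀ n : ℤ, n < 0 → Measurable[m] (X n)) (j : ℕ) :
    patF G X j ≤ m := by
  rw [patF_eq_comap]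
  intro s hs
  obtain ⟨S, -, rfl⟩ := hs
  classical
  have hset : (fun ω => PhiQ G X j ω) ⁻¹' S =
      ⋃ p : Σ m' : ℕ, Fin m' → ℕ,
        if patQ p.1 p.2 ∈ S then
          ({ω | lamQ G X j ω = p.1} ∩
            ⋂ i : Fin p.1, {ω | G j (X (-((i : ℕ) : ℤ) - 1) ω) = p.2 i})
        else ∅ := by
    ext ω
    simp only [Set.mem_preimage, Set.mem_iUnion]
    constructor
    · intro hω
      refine ⟨⟨lamQ G X j ω, fun i => G j (X (-((i : ℕ) : ℤ) - 1) ω)⟩, ?_⟩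
      rw [if_pos (by rw [← PhiQ_eq_patQ]; exact hω)]
      exact ⟨rfl, by simp⟩
    · rintro ⟨p, hp⟩
      obtain ⟨m', v⟩ := p
      by_cases hin : patQ m' v ∈ S
      · rw [if_pos hin] at hp
        obtain ⟨hlam, hv⟩ := hp
        simp only [Set.mem_setOf_eq] at hlam
        subst hlam
        have hveq : (fun i : Fin (lamQ G X j ω) => G j (X (-((i : ℕ) : ℤ) - 1) ω)) = v := by
          funext i
          simpa using Set.mem_iInter.1 hv i
        rw [PhiQ_eq_patQ, hveq]
        exact hin
      · rw [if_neg hin] at hp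
        exact absurd hp (Set.notMem_empty ω)
  rw [hset]
  refine MeasurableSet.iUnion fun p => ?_
  by_cases hin : patQ p.1 p.2 ∈ S
  · rw [if_pos hin]
    refine MeasurableSet.inter ?_ (MeasurableSet.iInter fun i => ?_)
    · exact lamQ_measurable G X hG hX j (measurableSet_singleton p.1)
    · have : Measurable[m] (fun ω => G j (X (-((i : ℕ) : ℤ) - 1) ω)) :=
        measurable_GX G X hG hX j (by omega)
      exact this (measurableSet_singleton (p.2 i))
  · rw [if_neg hin]
    exact MeasurableSet.empty

end Pattern

section Det

variable {Ω : Type*} (G : ℕ → ℝ → ℕ) (X : ℤ → Ω → ℝ)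

lemma PhiQ_basic {j : ℕ} {ω ω' : Ω} (hΦ : PhiQ G X j ω = PhiQ G X j ω') :
    lamQ G X j ω = lamQ G X j ω' ∧
      ∀ i : ℕ, 1 ≤ i → i ≤ lamQ G X j ω →
        G j (X (-(i : ℤ)) ω) = G j (X (-(i : ℤ)) ω') := by
  have hauxle : ∀ ω₁ ω₂ : Ω, PhiQ G X j ω₁ = PhiQ G X j ω₂ →
      lamQ G X j ω₂ ≤ lamQ G X j ω₁ := by
    intro ω₁ ω₂ h12
    by_contra hle
    have h1 : PhiQ G X j ω₁ (lamQ G X j ω₂) = PhiQ G X j ω₂ (lamQ G X j ω₂) :=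
      congrFun h12 _
    unfold PhiQ at h1
    rw [if_neg (fun hc => hle hc.2), if_pos ⟨one_le_lamQ G X j ω₂, le_refl _⟩] at h1
    exact absurd h1.symm (by simp)
  have hlam : lamQ G X j ω = lamQ G X j ω' :=
    le_antisymm (hauxle ω' ω hΦ.symm) (hauxle ω ω' hΦ)
  refine ⟨hlam, fun i hi hile => ?_⟩
  have h := congrFun hΦ i
  unfold PhiQ at h
  rw [if_pos ⟨hi, hile⟩, if_pos ⟨hi, hlam ▸ hile⟩] at h
  exact Option.some_injective _ h

lemma lamQ_det
    (hGmono : ∀ k, MeasurableSpace.comap (G k) ⊤ ≤ MeasurableSpace.comap (G (k + 1)) ⊤)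
    {j : ℕ} {ω ω' : Ω} (hΦ : PhiQ G X (j + 1) ω = PhiQ G X (j + 1) ω') :
    ∀ m, m ≤ j + 1 → lamQ G X m ω = lamQ G X m ω' := by
  obtain ⟨hL, hval⟩ := PhiQ_basic G X hΦ
  intro m hm
  induction m with
  | zero => rfl
  | succ m ih =>
    have hIH : lamQ G X m ω = lamQ G X m ω' := ih (by omega)
    have hm1 : m + 1 ≤ j + 1 := hm
    set Aset := {t : ℕ | 0 < t ∧ ∀ i : ℕ, 1 ≤ i → i ≤ lamQ G X m ω →
        G (m + 1) (X (-(i : ℤ) - (t : ℤ)) ω) = G (m + 1) (X (-(i : ℤ)) ω)} with hAdef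
    set Bset := {t : ℕ | 0 < t ∧ ∀ i : ℕ, 1 ≤ i → i ≤ lamQ G X m ω' →
        G (m + 1) (X (-(i : ℤ) - (t : ℤ)) ω') = G (m + 1) (X (-(i : ℤ)) ω')} with hBdef
    have hdet := G_det G hGmono (m + 1) (j + 1) hm1
    have transfer : ∀ t : ℕ, 0 < t → lamQ G X m ω + t ≤ lamQ G X (j + 1) ω →
        (t ∈ Aset ↔ t ∈ Bset) := by
      intro t ht hbound
      have key : ∀ i : ℕ, 1 ≤ i → i ≤ lamQ G X m ω →
          (G (m + 1) (X (-(i : ℤ)) ω) = G (m + 1) (X (-(i : ℤ)) ω') ∧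
           G (m + 1) (X (-(i : ℤ) - (t : ℤ)) ω) = G (m + 1) (X (-(i : ℤ) - (t : ℤ)) ω')) := by
        intro i hi hile
        have hiL : i ≤ lamQ G X (j + 1) ω :=
          le_trans hile (le_trans (Nat.le_add_right _ t) hbound)
        have h1 : G (m + 1) (X (-(i : ℤ)) ω) = G (m + 1) (X (-(i : ℤ)) ω') :=
          hdet _ _ (hval i hi hiL)
        have hitL : i + t ≤ lamQ G X (j + 1) ω := le_trans (by omega) hbound
        have h2' := hval (i + t) (by omega) hitL
        have hcast : (-(((i + t) : ℕ) : ℤ)) = -(i : ℤ) - (t : ℤ) := by push_cast; ring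
        rw [hcast] at h2'
        exact ⟨h1, hdet _ _ h2'⟩
      constructor
      · rintro ⟨-, h⟩
        refine ⟨ht, fun i hi hile => ?_⟩
        have hile' : i ≤ lamQ G X m ω := hIH ▸ hile
        obtain ⟨e1, e2⟩ := key i hi hile'
        rw [← e1, ← e2]
        exact h i hi hile'
      · rintro ⟨-, h⟩
        refine ⟨ht, fun i hi hile => ?_⟩
        obtain ⟨e1, e2⟩ := key i hi hile
        rw [e1, e2]
        exact h i hi (hIH ▸ hile)
    have hsucc_ω : lamQ G X (m + 1) ω = sInf Aset + lamQ G X m ω := rfl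
    have hsucc_ω' : lamQ G X (m + 1) ω' = sInf Bset + lamQ G X m ω' := rfl
    have hAle : sInf Aset + lamQ G X m ω ≤ lamQ G X (j + 1) ω := by
      rw [← hsucc_ω]; exact lamQ_mono G X ω hm1
    have hBle : sInf Bset + lamQ G X m ω' ≤ lamQ G X (j + 1) ω' := by
      rw [← hsucc_ω']; exact lamQ_mono G X ω' hm1
    have hsInf : sInf Aset = sInf Bset := by
      by_cases hA : Aset.Nonempty
      · have hτA := Nat.sInf_mem hA
        have hτB : sInf Aset ∈ Bset :=
          (transfer _ hτA.1 (by omega)).1 hτA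
        have hB : Bset.Nonempty := ⟨_, hτB⟩
        have hτ'B := Nat.sInf_mem hB
        have hτ'A : sInf Bset ∈ Aset := by
          refine (transfer _ hτ'B.1 ?_).2 hτ'B
          omega
        exact le_antisymm (Nat.sInf_le hτ'A) (Nat.sInf_le hτB)
      · by_cases hB : Bset.Nonempty
        · have hτ'B := Nat.sInf_mem hB
          have hτ'A : sInf Bset ∈ Aset := by
            refine (transfer _ hτ'B.1 ?_).2 hτ'B
            omega
          exact absurd ⟨_, hτ'A⟩ hA
        · rw [Set.not_nonempty_iff_eq_empty] at hA hB
          rw [hA, hB]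
    calc lamQ G X (m + 1) ω = sInf Aset + lamQ G X m ω := hsucc_ω
      _ = sInf Bset + lamQ G X m ω' := by rw [hsInf, hIH]
      _ = lamQ G X (m + 1) ω' := hsucc_ω'.symm

lemma patF_mono
    (hGmono : ∀ k, MeasurableSpace.comap (G k) ⊤ ≤ MeasurableSpace.comap (G (k + 1)) ⊤) :
    Monotone (patF G X) := by
  apply monotone_nat_of_le_succ
  intro j
  rw [patF_eq_comap, patF_eq_comap]
  apply comap_top_mono
  intro ω ω' hΦ
  obtain ⟨hL, hval⟩ := PhiQ_basic G X hΦ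
  have hlamj : lamQ G X j ω = lamQ G X j ω' :=
    lamQ_det G X hGmono hΦ j (Nat.le_succ j)
  funext i
  unfold PhiQ
  by_cases h : 1 ≤ i ∧ i ≤ lamQ G X j ω
  · rw [if_pos h, if_pos ⟨h.1, hlamj ▸ h.2⟩]
    have hiL : i ≤ lamQ G X (j + 1) ω := le_trans h.2 (lamQ_mono G X ω (Nat.le_succ j))
    rw [G_det G hGmono j (j + 1) (Nat.le_succ j) _ _ (hval i h.1 hiL)]
  · rw [if_neg h, if_neg (fun hc => h ⟨hc.1, hlamj ▸ hc.2⟩)]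

end Det

section Recur

variable {Ω : Type*} [MeasurableSpace Ω] (μ : Measure Ω) [IsProbabilityMeasure μ]
  (T : Ω → Ω) (G : ℕ → ℝ → ℕ) (X : ℤ → Ω → ℝ)

lemma shift_iterate (hshift : ∀ n ω, X n (T ω) = X (n + 1) ω) :
    ∀ (s : ℕ) (n : ℤ) (ω : Ω), X n (T^[s] ω) = X (n + s) ω := by
  intro s
  induction s with
  | zero => simp
  | succ s ih =>
    intro n ω
    rw [Function.iterate_succ_apply, ih, hshift]
    congr 1
    push_cast
    ring

/-- The bad event: the pattern `v` occurs at shift `s` in the past but never recurs deeper. -/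
def badE (k m' : ℕ) (v : Fin m' → ℕ) (s : ℕ) : Set Ω :=
  {ω | (∀ i : Fin m', G (k + 1) (X (-((i : ℕ) : ℤ) - 1 - (s : ℤ)) ω) = v i) ∧
    ∀ t : ℕ, 1 ≤ t → ∃ i : Fin m',
      G (k + 1) (X (-((i : ℕ) : ℤ) - 1 - (s : ℤ) - (t : ℤ)) ω) ≠ v i}

lemma badE_measurable (hXmeas : ∀ n, Measurable (X n)) (hG : ∀ k, Measurable (G k))
    (k m' : ℕ) (v : Fin m' → ℕ) (s : ℕ) : MeasurableSet (badE G X k m' v s) := by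
  have hmeq : ∀ (n : ℤ) (c : ℕ), MeasurableSet {ω : Ω | G (k + 1) (X n ω) = c} :=
    fun n c => ((hG (k + 1)).comp (hXmeas n)) (measurableSet_singleton c)
  have h1 : MeasurableSet {ω : Ω | ∀ i : Fin m',
      G (k + 1) (X (-((i : ℕ) : ℤ) - 1 - (s : ℤ)) ω) = v i} := by
    rw [Set.setOf_forall]
    exact MeasurableSet.iInter fun i => hmeq _ _
  have h2 : MeasurableSet {ω : Ω | ∀ t : ℕ, 1 ≤ t → ∃ i : Fin m',
      G (k + 1) (X (-((i : ℕ) : ℤ) - 1 - (s : ℤ) - (t : ℤ)) ω) ≠ v i} := by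
    rw [Set.setOf_forall]
    refine MeasurableSet.iInter fun t => ?_
    by_cases ht : 1 ≤ t
    · simp only [ht, true_implies]
      rw [Set.setOf_exists]
      exact MeasurableSet.iUnion fun i => (hmeq _ (v i)).compl
    · simp [ht]
  exact h1.inter h2



lemma badE_preimage (hshift : ∀ n ω, X n (T ω) = X (n + 1) ω)
    (k m' : ℕ) (v : Fin m' → ℕ) (s : ℕ) :
    T^[s] ⁻¹' (badE G X k m' v s) = badE G X k m' v 0 := by
  ext ω
  simp only [badE, Set.mem_preimage, Set.mem_setOf_eq]
  have hit : ∀ n : ℤ, X n (T^[s] ω) = X (n + s) ω := fun n => shift_iterate T X hshift s n ω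
  constructor
  · rintro ⟨ha, hb⟩
    constructor
    · intro i
      have := ha i
      rw [hit] at this
      convert this using 3
      push_cast
      ring
    · intro t ht
      obtain ⟨i, hi⟩ := hb t ht
      refine ⟨i, fun hc => hi ?_⟩
      rw [hit]
      convert hc using 3
      push_cast
      ring
  · rintro ⟨ha, hb⟩
    constructor
    · intro i
      rw [hit]
      convert ha i using 3
      push_cast
      ring
    · intro t ht
      obtain ⟨i, hi⟩ := hb t ht
      refine ⟨i, fun hc => hi ?_⟩
      rw [hit] at hc
      convert hc using 3
      push_cast
      ring

lemma badE_zero (hT : MeasurePreserving T μ μ)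
    (hshift : ∀ n ω, X n (T ω) = X (n + 1) ω)
    (hXmeas : ∀ n, Measurable (X n)) (hG : ∀ k, Measurable (G k))
    (k m' : ℕ) (v : Fin m' → ℕ) : μ (badE G X k m' v 0) = 0 := by
  by_contra h0
  have hdisj' : ∀ s s' : ℕ, s < s' → Disjoint (badE G X k m' v s) (badE G X k m' v s') := by
    intro s s' hss'
    rw [Set.disjoint_left]
    rintro ω ⟨-, h1b⟩ ⟨h2a, -⟩
    obtain ⟨i, hi⟩ := h1b (s' - s) (by omega)
    apply hi
    have := h2a i
    convert this using 3
    push_cast [Nat.cast_sub hss'.le]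
    ring
  have hdisj : Pairwise (Function.onFun Disjoint (badE G X k m' v)) := by
    intro s s' hne
    rcases lt_or_gt_of_ne hne with h | h
    · exact hdisj' _ _ h
    · exact (hdisj' _ _ h).symm
  have hmeq : ∀ s, μ (badE G X k m' v s) = μ (badE G X k m' v 0) := by
    intro s
    rw [← badE_preimage T G X hshift k m' v s]
    exact ((hT.iterate s).measure_preimage
      (badE_measurable G X hXmeas hG k m' v s).nullMeasurableSet).symm
  have hunion : μ (⋃ s, badE G X k m' v s) = ∑' s : ℕ, μ (badE G X k m' v s) :=
    measure_iUnion hdisj (fun s => badE_measurable G X hXmeas hG k m' v s)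
  have htop : μ (⋃ s, badE G X k m' v s) = ⊤ := by
    rw [hunion]
    rw [tsum_congr hmeq]
    exact ENNReal.tsum_const_eq_top_of_ne_zero h0
  exact measure_ne_top μ _ htop

lemma recur_nonempty (hT : MeasurePreserving T μ μ)
    (hshift : ∀ n ω, X n (T ω) = X (n + 1) ω)
    (hXmeas : ∀ n, Measurable (X n)) (hG : ∀ k, Measurable (G k)) :
    ∀ᵐ ω ∂μ, ∀ k : ℕ,
      {t : ℕ | 0 < t ∧ ∀ i : ℕ, 1 ≤ i → i ≤ lamQ G X k ω →
        G (k + 1) (X (-(i : ℤ) - (t : ℤ)) ω) = G (k + 1) (X (-(i : ℤ)) ω)}.Nonempty := by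
  have hae : ∀ᵐ ω ∂μ, ∀ (k m' : ℕ) (v : Fin m' → ℕ), ω ∉ badE G X k m' v 0 := by
    rw [ae_all_iff]
    intro k
    rw [ae_all_iff]
    intro m'
    rw [ae_all_iff]
    intro v
    have := badE_zero μ T G X hT hshift hXmeas hG k m' v
    exact measure_eq_zero_iff_ae_notMem.mp this
  filter_upwards [hae] with ω hω k
  have hnot := hω k (lamQ G X k ω) (fun i => G (k + 1) (X (-((i : ℕ) : ℤ) - 1) ω))
  simp only [badE, Set.mem_setOf_eq, not_and, sub_zero, Nat.cast_zero] at hnot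
  have h2 := hnot (fun _ => trivial)
  push_neg at h2
  obtain ⟨t, ht1, ht2⟩ := h2
  refine ⟨t, by omega, fun i hi hile => ?_⟩
  have hspec := ht2 ⟨i - 1, by omega⟩
  simp only [Fin.val_mk] at hspec
  have e1 : -(((i - 1 : ℕ)) : ℤ) - 1 - (t : ℤ) = -(i : ℤ) - (t : ℤ) := by omega
  have e2 : -(((i - 1 : ℕ)) : ℤ) - 1 = -(i : ℤ) := by omega
  rw [e1, e2] at hspec
  exact hspec

end Recur

section Limit

variable {Ω : Type*} [MeasurableSpace Ω] (G : ℕ → ℝ → ℕ) (X : ℤ → Ω → ℝ)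

lemma exists_V
    (hGmono : ∀ k, MeasurableSpace.comap (G k) ⊤ ≤ MeasurableSpace.comap (G (k + 1)) ⊤)
    (k n : ℕ) :
    ∃ V : Ω → ℕ, Measurable[⨆ j, patF G X j] V ∧
      ∀ ω : Ω, (∀ m : ℕ, m + 1 ≤ lamQ G X m ω) → V ω = G k (X (-(n : ℤ) - 1) ω) := by
  have hfac : ∀ j : ℕ, ∃ hf : ℕ → ℕ, ∀ x, G k x = hf (G (k + j) x) :=
    fun j => G_factor G hGmono (Nat.le_add_right k j)
  choose hf hhf using hfac
  set u : ℕ → Ω → ℕ := fun j ω => hf j ((PhiQ G X (k + j) ω (n + 1)).getD 0) with hu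
  have hu_meas : ∀ j, Measurable[⨆ j, patF G X j] (u j) := by
    intro j
    have h1 : Measurable[patF G X (k + j)] (u j) := by
      rw [patF_eq_comap]
      exact measurable_comp_comap_top (fun ω => PhiQ G X (k + j) ω)
        (fun p => hf j ((p (n + 1)).getD 0))
    exact h1.mono (le_iSup (fun j => patF G X j) (k + j)) le_rfl
  refine ⟨fun ω => sInf {b | ∃ J, ∀ j, J ≤ j → u j ω = b}, ?_, ?_⟩
  · apply measurable_sInf_pred
    intro b
    have : {ω : Ω | ∃ J, ∀ j, J ≤ j → u j ω = b} =
        ⋃ J : ℕ, ⋂ j : ℕ, ⋂ _ : J ≤ j, (u j) ⁻¹' {b} := by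
      ext ω
      simp only [Set.mem_setOf_eq, Set.mem_iUnion, Set.mem_iInter, Set.mem_preimage,
        Set.mem_singleton_iff]
    rw [this]
    exact MeasurableSet.iUnion fun J => MeasurableSet.iInter fun j =>
      MeasurableSet.iInter fun _ => hu_meas j (measurableSet_singleton b)
  · intro ω hω
    have hev : ∀ j, n ≤ j → u j ω = G k (X (-(n : ℤ) - 1) ω) := by
      intro j hj
      have hcond : 1 ≤ n + 1 ∧ n + 1 ≤ lamQ G X (k + j) ω :=
        ⟨by omega, by have := hω (k + j); omega⟩
      have : PhiQ G X (k + j) ω (n + 1) = some (G (k + j) (X (-((n + 1 : ℕ) : ℤ)) ω)) := by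
        unfold PhiQ
        rw [if_pos hcond]
      rw [hu]
      simp only [this, Option.getD_some]
      rw [← hhf j]
      congr 2
      push_cast
      ring
    have hset : {b | ∃ J, ∀ j, J ≤ j → u j ω = b} = {G k (X (-(n : ℤ) - 1) ω)} := by
      ext b
      simp only [Set.mem_setOf_eq, Set.mem_singleton_iff]
      constructor
      · rintro ⟨J, hJ⟩
        rw [← hJ (max J n) (le_max_left _ _), hev (max J n) (le_max_right _ _)]
      · rintro rfl
        exact ⟨n, fun j hj => hev j hj⟩
    change sInf {b | ∃ J, ∀ j, J ≤ j → u j ω = b} = _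
    rw [hset, csInf_singleton]

/-- The σ-algebra of sets having an `m`-measurable version modulo `μ`. -/
noncomputable def aeMS (μ : Measure Ω) (m : MeasurableSpace Ω) : MeasurableSpace Ω where
  MeasurableSet' A := ∃ A', MeasurableSet[m] A' ∧ ∀ᵐ ω ∂μ, (ω ∈ A ↔ ω ∈ A')
  measurableSet_empty := ⟨∅, @MeasurableSet.empty _ m, by simp⟩
  measurableSet_compl := by
    rintro A ⟨A', hA', hae⟩
    exact ⟨A'ᶜ, hA'.compl, by filter_upwards [hae] with ω h; simp [h]⟩
  measurableSet_iUnion := by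
    intro f hf
    choose A' hA' hae using hf
    refine ⟨⋃ i, A' i, MeasurableSet.iUnion hA', ?_⟩
    rw [← ae_all_iff] at hae
    filter_upwards [hae] with ω h
    simp only [Set.mem_iUnion]
    exact exists_congr h

lemma pastSigma_le_aeMS (μ : Measure Ω)
    (hGmono : ∀ k, MeasurableSpace.comap (G k) ⊤ ≤ MeasurableSpace.comap (G (k + 1)) ⊤)
    (hGgen : (⨆ k, MeasurableSpace.comap (G k) ⊤) = (inferInstance : MeasurableSpace ℝ))
    (hgrow : ∀ᵐ ω ∂μ, ∀ m : ℕ, m + 1 ≤ lamQ G X m ω) :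
    pastSigma X ≤ aeMS μ (⨆ j, patF G X j) := by
  unfold pastSigma
  apply iSup_le
  intro n
  have hBorel : (inferInstance : MeasurableSpace ℝ) ≤
      MeasurableSpace.map (X (-(n : ℤ) - 1)) (aeMS μ (⨆ j, patF G X j)) := by
    rw [← hGgen]
    apply iSup_le
    intro k
    rintro s ⟨S, -, rfl⟩
    obtain ⟨V, hVmeas, hV⟩ := exists_V G X hGmono k n
    refine ⟨V ⁻¹' S, hVmeas trivial, ?_⟩
    filter_upwards [hgrow] with ω h
    simp only [Set.mem_preimage, hV ω h]
  rintro A ⟨B, hB, rfl⟩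
  exact hBorel B hB

end Limit

lemma sum_Icc_pred_eq_sum_range (c : ℕ → ℝ) (k : ℕ) :
    ∑ j ∈ Finset.Icc 1 k, c (j - 1) = ∑ i ∈ Finset.range k, c i := by
  induction k with
  | zero => simp
  | succ k ih =>
    rw [Finset.sum_Icc_succ_top (by omega : 1 ≤ k + 1), ih, Finset.sum_range_succ]
    simp

/-- For every Borel set `C`, the Cesàro averages of the successive
conditional probabilities converge almost surely to the conditional probability given the
infinite past:
`(1/k) ∑_{j=1}^k P(X_0 ∈ C | σ(G_{j-1}(X_{-λ_{j-1}}^{-1}))) → P(X_0 ∈ C | X_{-1}, X_{-2}, …)`. -/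
theorem stmt8 {Ω : Type*} [MeasurableSpace Ω] (μ : Measure Ω) [IsProbabilityMeasure μ]
    (T : Ω → Ω) (X : ℤ → Ω → ℝ) (G : ℕ → ℝ → ℕ)
    (hErg : Ergodic T μ)
    (hXmeas : ∀ n, Measurable (X n))
    (hshift : ∀ n ω, X n (T ω) = X (n + 1) ω)
    (hGfin : ∀ k, (Set.range (G k)).Finite)
    (hGint : ∀ k n, ∃ a b : EReal,
      (G k) ⁻¹' {n} = {x : ℝ | a < (x : EReal) ∧ (x : EReal) ≤ b})
    (hGmono : ∀ k, MeasurableSpace.comap (G k) ⊤ ≤ MeasurableSpace.comap (G (k + 1)) ⊤)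
    (hGgen : (⨆ k, MeasurableSpace.comap (G k) ⊤) = (inferInstance : MeasurableSpace ℝ))
    (C : Set ℝ) (hC : MeasurableSet C) :
    ∀ᵐ ω ∂μ,
      Tendsto
        (fun k : ℕ => (1 / (k : ℝ)) * ∑ j ∈ Finset.Icc 1 k,
          (μ[Set.indicator (X 0 ⁻¹' C) (fun _ => (1 : ℝ)) | patF G X (j - 1)]) ω)
        atTop
        (𝓝 ((μ[Set.indicator (X 0 ⁻¹' C) (fun _ => (1 : ℝ)) | pastSigma X]) ω)) := by
  classical
  set f : Ω → ℝ := Set.indicator (X 0 ⁻¹' C) (fun _ => (1 : ℝ)) with hfdef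
  have hGmeas : ∀ k, Measurable (G k) := measurable_G G hGint
  have hXneg0 : ∀ n : ℤ, n < 0 → Measurable (X n) := fun n _ => hXmeas n
  have hpast_le : pastSigma X ≤ ‹MeasurableSpace Ω› := by
    unfold pastSigma
    exact iSup_le fun n => (hXmeas _).comap_le
  have hXpast : ∀ n : ℤ, n < 0 → Measurable[pastSigma X] (X n) := by
    intro n hn
    apply Measurable.of_comap_le
    have hn' : n = -(((-n - 1).toNat : ℕ) : ℤ) - 1 := by omega
    rw [hn']
    exact le_iSup (fun m : ℕ => MeasurableSpace.comap (X (-(m : ℤ) - 1)) inferInstance)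
      ((-n - 1).toNat)
  have hpatF_le : ∀ j, patF G X j ≤ ‹MeasurableSpace Ω› :=
    fun j => patF_le_of G X hGmeas hXneg0 j
  set ℱ : Filtration ℕ ‹MeasurableSpace Ω› :=
    ⟨fun j => patF G X j, patF_mono G X hGmono, hpatF_le⟩ with hℱdef
  have hf_int : Integrable f μ := (integrable_const (1 : ℝ)).indicator (hXmeas 0 hC)
  have hlevy := tendsto_ae_condExp (μ := μ) (ℱ := ℱ) f
  have hgrow : ∀ᵐ ω ∂μ, ∀ m : ℕ, m + 1 ≤ lamQ G X m ω := by
    filter_upwards [recur_nonempty μ T G X hErg.toMeasurePreserving hshift hXmeas hGmeas]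
      with ω hrec
    intro m
    induction m with
    | zero => exact one_le_lamQ G X 0 ω
    | succ m ih =>
      have hne := hrec m
      have hpos := (Nat.sInf_mem hne).1
      rw [lamQ_succ]
      omega
  have hm_le_past : (⨆ j, patF G X j) ≤ pastSigma X :=
    iSup_le fun j => patF_le_of G X hGmeas hXpast j
  have hm_le : (⨆ j, patF G X j) ≤ ‹MeasurableSpace Ω› := hm_le_past.trans hpast_le
  have haeMS := pastSigma_le_aeMS G X μ hGmono hGgen hgrow
  have h2 : (μ[f|⨆ j, patF G X j]) =ᵐ[μ] μ[f|pastSigma X] := by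
    refine ae_eq_condExp_of_forall_setIntegral_eq hpast_le hf_int
      (fun s _ _ => integrable_condExp.integrableOn) (fun s hs _ => ?_)
      (stronglyMeasurable_condExp.mono hm_le_past).aestronglyMeasurable
    obtain ⟨s', hs', hae⟩ := haeMS s hs
    have hseq : s =ᵐ[μ] s' := Filter.eventuallyEq_set.mpr hae
    rw [setIntegral_congr_set hseq, setIntegral_condExp hm_le hf_int hs']
    exact (setIntegral_congr_set hseq).symm
  filter_upwards [hlevy, h2] with ω hω heq
  have hten : Tendsto (fun n => (μ[f|patF G X n]) ω) atTop (𝓝 ((μ[f|pastSigma X]) ω)) := by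
    rw [← heq]
    exact hω
  refine hten.cesaro.congr fun k => ?_
  rw [one_div, ← sum_Icc_pred_eq_sum_range (fun i => (μ[f|patF G X i]) ω) k]
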